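/- In the digraph D_k of Proposition 1.3, every directed cycle C satisfies |C| = Σ_{e ∈ F(C)} L(e), where F(C) is the set of forward arcs used by C and L(e) is the prescribed length of the forward arc e. Consequently, two directed cycles in D_k have equal length if and only if they use the same set of forward arcs, and since the multiset of forward-arc lengths has pairwise distinct subset sums, D_k contains no two arc-disjoint directed cycles of equal length. -/

import Mathlib

/-- A directed cycle of length `n` in the digraph with arc relation `A`. -/
def IsDicycle {V : Type*} (A : V → V → Prop) (n : ℕ) (c : ℕ → V) : Prop :=
  2 ≤ n ∧ (∀ i, A (c i) (c (i + 1))) ∧ (∀ i, c (i + n) = c i) ∧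
    ∀ i j, i < n → j < n → c i = c j → i = j

/-- In the digraph `D_k` (abstracted: vertices carry a level `part`, every
non-forward arc descends by exactly one level, every forward arc `(u,v)` ascends and has
prescribed length `L(u,v) = part v − part u + 1`), every directed cycle `C` satisfies
`|C| = Σ_{e ∈ F(C)} L(e)`, where `F(C)` is the set of forward arcs used by `C`.
Consequently, if the forward-arc lengths have pairwise distinct subset sums, then no two
directed cycles of equal length are arc-disjoint: they share an arc. -/
theorem stmt12 {V : Type*} [DecidableEq V] (A F : V → V → Prop) [DecidableRel F]
    (part : V → ℕ)
    (hFA : ∀ u v, F u v → A u v)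
    (hback : ∀ u v, A u v → ¬ F u v → part v + 1 = part u)
    (hfwd : ∀ u v, F u v → part u < part v) :
    (∀ (n : ℕ) (c : ℕ → V), IsDicycle A n c →
      n = ∑ p ∈ ((Finset.range n).filter (fun i => F (c i) (c (i + 1)))).image
            (fun i => (c i, c (i + 1))), (part p.2 - part p.1 + 1)) ∧
    ((∀ T₁ T₂ : Finset (V × V), (∀ p ∈ T₁, F p.1 p.2) → (∀ p ∈ T₂, F p.1 p.2) →
        ∑ p ∈ T₁, (part p.2 - part p.1 + 1) = ∑ p ∈ T₂, (part p.2 - part p.1 + 1) →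
        T₁ = T₂) →
      ∀ (n : ℕ) (c c' : ℕ → V), IsDicycle A n c → IsDicycle A n c' →
        ∃ i j, i < n ∧ j < n ∧ (c i, c (i + 1)) = (c' j, c' (j + 1))) := by
  have key : ∀ (n : ℕ) (c : ℕ → V), IsDicycle A n c →
      n = ∑ p ∈ ((Finset.range n).filter (fun i => F (c i) (c (i + 1)))).image
            (fun i => (c i, c (i + 1))), (part p.2 - part p.1 + 1) := by
    intro n c hc
    obtain ⟨hn2, harc, hper, hinj⟩ := hc
    have himg : ∑ p ∈ ((Finset.range n).filter (fun i => F (c i) (c (i + 1)))).image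
            (fun i => (c i, c (i + 1))), (part p.2 - part p.1 + 1)
        = ∑ i ∈ (Finset.range n).filter (fun i => F (c i) (c (i + 1))),
            (part (c (i + 1)) - part (c i) + 1) := by
      refine Finset.sum_image ?_
      intro i hi j hj hij
      simp only [Finset.mem_coe, Finset.mem_filter, Finset.mem_range] at hi hj
      exact hinj i j hi.1 hj.1 (congrArg Prod.fst hij)
    rw [himg]
    -- integer telescoping
    have htel : ∑ i ∈ Finset.range n, ((part (c (i + 1)) : ℤ) - part (c i)) = 0 := by
      rw [Finset.sum_range_sub (fun i => (part (c i) : ℤ))]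
      have : c n = c 0 := by simpa using hper 0
      rw [this]; ring
    have hsplit := Finset.sum_filter_add_sum_filter_not (Finset.range n)
      (fun i => F (c i) (c (i + 1)))
      (fun i => ((part (c (i + 1)) : ℤ) - part (c i)))
    have hb : ∑ i ∈ (Finset.range n).filter (fun i => ¬ F (c i) (c (i + 1))),
        ((part (c (i + 1)) : ℤ) - part (c i))
        = -(((Finset.range n).filter (fun i => ¬ F (c i) (c (i + 1)))).card : ℤ) := by
      have hone : ∀ i ∈ (Finset.range n).filter (fun i => ¬ F (c i) (c (i + 1))),
          ((part (c (i + 1)) : ℤ) - part (c i)) = -1 := by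
        intro i hi
        simp only [Finset.mem_filter] at hi
        have h' := hback (c i) (c (i + 1)) (harc i) hi.2
        have h'' : (part (c (i + 1)) : ℤ) + 1 = part (c i) := by exact_mod_cast h'
        linarith
      rw [Finset.sum_congr rfl hone, Finset.sum_const, smul_neg, nsmul_eq_mul, mul_one]
    have hcard : ((Finset.range n).filter (fun i => F (c i) (c (i + 1)))).card
        + ((Finset.range n).filter (fun i => ¬ F (c i) (c (i + 1)))).card = n := by
      rw [Finset.card_filter_add_card_filter_not, Finset.card_range]
    -- cast the ℕ sum to ℤ
    have hcast : ((∑ i ∈ (Finset.range n).filter (fun i => F (c i) (c (i + 1))),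
        (part (c (i + 1)) - part (c i) + 1) : ℕ) : ℤ)
        = ∑ i ∈ (Finset.range n).filter (fun i => F (c i) (c (i + 1))),
            (((part (c (i + 1)) : ℤ) - part (c i)) + 1) := by
      push_cast
      refine Finset.sum_congr rfl (fun i hi => ?_)
      simp only [Finset.mem_filter] at hi
      have := (hfwd _ _ hi.2).le
      push_cast [Nat.cast_sub this]
      ring
    have : (n : ℤ) = ∑ i ∈ (Finset.range n).filter (fun i => F (c i) (c (i + 1))),
        (((part (c (i + 1)) : ℤ) - part (c i)) + 1) := by
      rw [Finset.sum_add_distrib, Finset.sum_const]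
      have h1 : ∑ i ∈ (Finset.range n).filter (fun i => F (c i) (c (i + 1))),
          ((part (c (i + 1)) : ℤ) - part (c i))
          = ((Finset.range n).filter (fun i => ¬ F (c i) (c (i + 1)))).card := by
        have := hsplit
        rw [htel] at this
        rw [hb] at this
        linarith
      rw [h1]
      simp only [nsmul_eq_mul, mul_one]
      exact_mod_cast ((Nat.add_comm _ _).trans hcard).symm
    exact_mod_cast this.trans hcast.symm
  refine ⟨key, fun hdist n c c' hc hc' => ?_⟩
  set T₁ := ((Finset.range n).filter (fun i => F (c i) (c (i + 1)))).image
      (fun i => (c i, c (i + 1))) with hT₁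
  set T₂ := ((Finset.range n).filter (fun i => F (c' i) (c' (i + 1)))).image
      (fun i => (c' i, c' (i + 1))) with hT₂
  have h1 := key n c hc
  have h2 := key n c' hc'
  rw [← hT₁] at h1
  rw [← hT₂] at h2
  have hmem : ∀ p ∈ T₁, F p.1 p.2 := by
    intro p hp
    obtain ⟨i, hi, rfl⟩ := Finset.mem_image.mp hp
    exact (Finset.mem_filter.mp hi).2
  have hmem' : ∀ p ∈ T₂, F p.1 p.2 := by
    intro p hp
    obtain ⟨i, hi, rfl⟩ := Finset.mem_image.mp hp
    exact (Finset.mem_filter.mp hi).2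
  have hT : T₁ = T₂ := hdist T₁ T₂ hmem hmem' (by rw [← h1, ← h2])
  have hne : T₁.Nonempty := by
    rcases Finset.eq_empty_or_nonempty T₁ with h | h
    · rw [h, Finset.sum_empty] at h1
      have := hc.1; omega
    · exact h
  obtain ⟨p, hp⟩ := hne
  obtain ⟨i, hi, hpi⟩ := Finset.mem_image.mp hp
  have hp2 : p ∈ T₂ := hT ▸ hp
  obtain ⟨j, hj, hpj⟩ := Finset.mem_image.mp hp2
  exact ⟨i, j, Finset.mem_range.mp (Finset.mem_filter.mp hi).1,
    Finset.mem_range.mp (Finset.mem_filter.mp hj).1, hpi.trans hpj.symm⟩
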